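/- Let A, A1, A2 be Schur rings over finite abelian groups G = G1 × G2, G1, G2 respectively. Then A is the tensor product of A1 and A2 if and only if the dual S-ring Â is the tensor product of the dual S-rings Â1 and Â2 (identifying Ĝ with Ĝ1 × Ĝ2). -/

import Mathlib

open Pointwise
/-- A Schur ring over a finite group `G`, given combinatorially by its partition
into basic sets with constant structure constants. -/
structure SchurRing (G : Type*) [Group G] where
  parts : Set (Set G)
  nonempty : ∀ X ∈ parts, X.Nonempty
  cover : ∀ g : G, ∃ X ∈ parts, g ∈ X
  disjoint : ∀ X ∈ parts, ∀ Y ∈ parts, X ≠ Y → X ∩ Y = ∅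
  one_mem : {1} ∈ parts
  inv_closed : ∀ X ∈ parts, X⁻¹ ∈ parts
  struct_const : ∀ X ∈ parts, ∀ Y ∈ parts, ∀ Z ∈ parts, ∀ z₁ ∈ Z, ∀ z₂ ∈ Z,
    Set.ncard {xy : G × G | xy.1 ∈ X ∧ xy.2 ∈ Y ∧ xy.1 * xy.2 = z₁} =
    Set.ncard {xy : G × G | xy.1 ∈ X ∧ xy.2 ∈ Y ∧ xy.1 * xy.2 = z₂}

/-- A subset of `G` is an `A`-set if it is a union of basic sets of `A`. -/
def SchurRing.IsASet {G : Type*} [Group G] (A : SchurRing G) (S : Set G) : Prop :=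
  ∀ g ∈ S, ∃ X ∈ A.parts, g ∈ X ∧ X ⊆ S

noncomputable section

/-- The character sum `χ(S) = ∑_{s ∈ S} χ(s)`. -/
noncomputable def charSum {G : Type*} [Group G] (χ : G →* ℂ) (S : Set G) : ℂ :=
  ∑ᶠ s ∈ S, χ s

/-- The partition of the dual group (complex characters of `G`) dual to a family
of subsets of `G`. -/
def dualParts {G : Type*} [Group G] (parts : Set (Set G)) : Set (Set (G →* ℂ)) :=
  Set.range (fun χ₀ : G →* ℂ => {χ : G →* ℂ | ∀ S ∈ parts, charSum χ S = charSum χ₀ S})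

namespace TensorDualAux

open Finset
open scoped Classical

/-- Indicator function with complex values. -/
def ind {G : Type*} (S : Set G) : G → ℂ := S.indicator (fun _ => 1)

lemma ind_apply {G : Type*} (S : Set G) (g : G) :
    ind S g = if g ∈ S then 1 else 0 := by
  simp [ind, Set.indicator_apply]

/-- The submodule of functions constant on each member of `P`. -/
def PC {G : Type*} (P : Set (Set G)) : Submodule ℂ (G → ℂ) where
  carrier := {f | ∀ Z ∈ P, ∀ z₁ ∈ Z, ∀ z₂ ∈ Z, f z₁ = f z₂}
  add_mem' := fun hf hg Z hZ z₁ h₁ z₂ h₂ => by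
    simp only [Pi.add_apply, hf Z hZ z₁ h₁ z₂ h₂, hg Z hZ z₁ h₁ z₂ h₂]
  zero_mem' := fun Z hZ z₁ h₁ z₂ h₂ => rfl
  smul_mem' := fun c f hf Z hZ z₁ h₁ z₂ h₂ => by
    simp only [Pi.smul_apply, hf Z hZ z₁ h₁ z₂ h₂]

lemma mem_PC {G : Type*} {P : Set (Set G)} {f : G → ℂ} :
    f ∈ PC P ↔ ∀ Z ∈ P, ∀ z₁ ∈ Z, ∀ z₂ ∈ Z, f z₁ = f z₂ := Iff.rfl

/-- The Fourier transform as a linear map. -/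
def ftL (G : Type*) [CommGroup G] [Fintype G] : (G → ℂ) →ₗ[ℂ] ((G →* ℂ) → ℂ) where
  toFun f := fun χ => ∑ g, f g * χ g
  map_add' f g := by
    funext χ; simp [add_mul, Finset.sum_add_distrib]
  map_smul' c f := by
    funext χ; simp [Finset.mul_sum, mul_assoc]

lemma ftL_apply {G : Type*} [CommGroup G] [Fintype G] (f : G → ℂ) (χ : G →* ℂ) :
    ftL G f χ = ∑ g, f g * χ g := rfl

lemma charSum_eq_sum {G : Type*} [Group G] [Fintype G] (χ : G →* ℂ) (S : Set G) :
    charSum χ S = ∑ g ∈ (Set.toFinite S).toFinset, χ g := by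
  rw [charSum, ← finsum_mem_coe_finset, Set.Finite.coe_toFinset]

lemma ftL_ind {G : Type*} [CommGroup G] [Fintype G] (S : Set G) (χ : G →* ℂ) :
    ftL G (ind S) χ = charSum χ S := by
  classical
  rw [ftL_apply, charSum_eq_sum]
  rw [← Finset.sum_filter_add_sum_filter_not Finset.univ (· ∈ S)]
  have h1 : ∀ g ∈ Finset.univ.filter (· ∈ S), ind S g * χ g = χ g := by
    intro g hg; rw [ind_apply, if_pos (Finset.mem_filter.mp hg).2, one_mul]
  have h2 : ∀ g ∈ Finset.univ.filter (¬ · ∈ S), ind S g * χ g = 0 := by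
    intro g hg; rw [ind_apply, if_neg (Finset.mem_filter.mp hg).2, zero_mul]
  rw [Finset.sum_congr rfl h1, Finset.sum_congr rfl h2, Finset.sum_const_zero, add_zero]
  apply Finset.sum_congr _ (fun _ _ => rfl)
  ext g
  simp only [Finset.mem_filter, Finset.mem_univ, true_and, Set.Finite.mem_toFinset]

lemma ftL_ind_one {G : Type*} [CommGroup G] [Fintype G] (χ : G →* ℂ) :
    ftL G (ind {1}) χ = 1 := by
  rw [ftL_ind, charSum, finsum_mem_singleton, map_one]


/-- Products of elements of a set remaining in the span implies the span is
closed under multiplication. -/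
lemma span_mul_closed {T : Type*} (s : Set (T → ℂ))
    (hs : ∀ f ∈ s, ∀ g ∈ s, f * g ∈ Submodule.span ℂ s) :
    ∀ u ∈ Submodule.span ℂ s, ∀ v ∈ Submodule.span ℂ s, u * v ∈ Submodule.span ℂ s := by
  intro u hu
  induction hu using Submodule.span_induction with
  | mem f hf =>
    intro v hv
    induction hv using Submodule.span_induction with
    | mem g hg => exact hs f hf g hg
    | zero => simpa using Submodule.zero_mem _
    | add a b _ _ ha hb => rw [mul_add]; exact Submodule.add_mem _ ha hb
    | smul c a _ ha => rw [mul_smul_comm]; exact Submodule.smul_mem _ _ ha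
  | zero => intro v hv; simpa using Submodule.zero_mem _
  | add a b _ _ ha hb =>
    intro v hv; rw [add_mul]; exact Submodule.add_mem _ (ha v hv) (hb v hv)
  | smul c a _ ha =>
    intro v hv; rw [smul_mul_assoc]; exact Submodule.smul_mem _ _ (ha v hv)

/-- Finite-dimensional interpolation: a submodule of functions on a finite type that
contains the constants and is closed under multiplication contains every function that
is constant on the level classes of the submodule. -/
theorem mem_of_relConst {T : Type*} [Fintype T] (U : Submodule ℂ (T → ℂ))
    (h1 : (1 : T → ℂ) ∈ U) (hmul : ∀ u ∈ U, ∀ v ∈ U, u * v ∈ U)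
    (h : T → ℂ) (hh : ∀ t t' : T, (∀ f ∈ U, f t = f t') → h t = h t') : h ∈ U := by
  classical
  set R : T → T → Prop := fun t t' => ∀ f ∈ U, f t = f t' with hR
  have hsep : ∀ t t', ¬ R t t' → ∃ f, f ∈ U ∧ f t ≠ f t' := by
    intro t t' hn
    by_contra hc
    push_neg at hc
    exact hn fun f hf => hc f hf
  choose sep hsepU hsepne using hsep
  -- the idempotent-like function for the class of `t`
  set fac : T → T → (T → ℂ) := fun t t' =>
    if hn : R t t' then 1
    else fun s => (sep t t' hn s - sep t t' hn t') * (sep t t' hn t - sep t t' hn t')⁻¹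
    with hfac
  have facU : ∀ t t', fac t t' ∈ U := by
    intro t t'
    by_cases hn : R t t'
    · show (if hn' : R t t' then (1 : T → ℂ)
        else fun s => (sep t t' hn' s - sep t t' hn' t') * (sep t t' hn' t - sep t t' hn' t')⁻¹) ∈ U
      rw [dif_pos hn]; exact h1
    · have : fac t t' = (sep t t' hn t - sep t t' hn t')⁻¹ •
          (sep t t' hn - (sep t t' hn t') • (1 : T → ℂ)) := by
        funext s; simp [hfac, hn]; ring
      rw [this]
      exact U.smul_mem _ (U.sub_mem (hsepU t t' hn) (U.smul_mem _ h1))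
  have fac_self : ∀ t t', fac t t' t = 1 := by
    intro t t'
    by_cases hn : R t t'
    · show (if hn' : R t t' then (1 : T → ℂ)
        else fun s => (sep t t' hn' s - sep t t' hn' t') * (sep t t' hn' t - sep t t' hn' t')⁻¹) t = 1
      rw [dif_pos hn]; rfl
    · have hne : sep t t' hn t - sep t t' hn t' ≠ 0 := sub_ne_zero.mpr (hsepne t t' hn)
      simp only [hfac, hn, dif_neg, not_false_iff]
      exact mul_inv_cancel₀ hne
  have fac_zero : ∀ t t' (hn : ¬ R t t'), fac t t' t' = 0 := by
    intro t t' hn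
    show (if hn' : R t t' then (1 : T → ℂ)
      else fun s => (sep t t' hn' s - sep t t' hn' t') * (sep t t' hn' t - sep t t' hn' t')⁻¹) t' = 0
    rw [dif_neg hn]
    simp
  set e : T → (T → ℂ) := fun t => ∏ t', fac t t' with he
  have eU : ∀ t, e t ∈ U := by
    intro t
    apply Finset.prod_induction _ (· ∈ U) (fun a b ha hb => hmul a ha b hb) h1
    exact fun t' _ => facU t t'
  have e_self : ∀ t, e t t = 1 := by
    intro t
    have : e t t = ∏ t', fac t t' t := by simp [he]
    rw [this]
    exact Finset.prod_eq_one fun t' _ => fac_self t t'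
  have e_zero : ∀ t t', ¬ R t t' → e t t' = 0 := by
    intro t t' hn
    have : e t t' = ∏ s, fac t s t' := by simp [he]
    rw [this]
    exact Finset.prod_eq_zero (Finset.mem_univ t') (fac_zero t t' hn)
  have e_one : ∀ t t', R t t' → e t t' = 1 := by
    intro t t' hr
    rw [← hr (e t) (eU t), e_self]
  -- R is an equivalence relation
  have Rrefl : ∀ t, R t t := fun t f _ => rfl
  have Rsymm : ∀ {t t'}, R t t' → R t' t := fun hr f hf => (hr f hf).symm
  have Rtrans : ∀ {t t' t''}, R t t' → R t' t'' → R t t'' :=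
    fun h1 h2 f hf => (h1 f hf).trans (h2 f hf)
  set n : T → ℕ := fun t => (Finset.univ.filter (R t)).card with hn
  have npos : ∀ t, 0 < n t := by
    intro t
    apply Finset.card_pos.mpr ⟨t, Finset.mem_filter.mpr ⟨Finset.mem_univ t, Rrefl t⟩⟩
  have hfilter : ∀ {t t'}, R t t' → Finset.univ.filter (R t) = Finset.univ.filter (R t') := by
    intro t t' hr
    apply Finset.filter_congr
    intro x _
    exact ⟨fun hx => Rtrans (Rsymm hr) hx, fun hx => Rtrans hr hx⟩
  have key : h = ∑ t, (h t * (n t : ℂ)⁻¹) • e t := by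
    funext s
    rw [Finset.sum_apply]
    have hzero : ∀ t ∈ Finset.univ, t ∉ Finset.univ.filter (fun t => R t s) →
        ((h t * (n t : ℂ)⁻¹) • e t) s = 0 := by
      intro t _ ht
      have : ¬ R t s := by simpa using ht
      simp [e_zero t s this]
    rw [← Finset.sum_subset (Finset.filter_subset _ _) hzero]
    have hcong : ∀ t ∈ Finset.univ.filter (fun t => R t s),
        ((h t * (n t : ℂ)⁻¹) • e t) s = h s * (n s : ℂ)⁻¹ := by
      intro t ht
      have hr : R t s := (Finset.mem_filter.mp ht).2
      have h1 : h t = h s := hh t s hr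
      have h2 : n t = n s := by simp only [hn]; rw [hfilter hr]
      simp [e_one t s hr, h1, h2]
    rw [Finset.sum_congr rfl hcong, Finset.sum_const]
    have hcard : (Finset.univ.filter (fun t => R t s)).card = n s := by
      rw [hn]
      congr 1
      apply Finset.filter_congr
      intro x _
      exact ⟨fun hx => Rsymm hx, fun hx => Rsymm hx⟩
    rw [hcard, nsmul_eq_mul]
    have : (n s : ℂ) ≠ 0 := Nat.cast_ne_zero.mpr (npos s).ne'
    field_simp
  rw [key]
  exact Submodule.sum_mem _ fun t _ =>
    Submodule.smul_mem _ _ (eU t)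


section Chars

variable (G : Type*) [CommGroup G] [Fintype G]

instance : NeZero (Monoid.exponent G) := ⟨Monoid.exponent_ne_zero_of_finite⟩

/-- Complex characters separate the points of a finite abelian group. -/
lemma exists_char {g : G} (hg : g ≠ 1) : ∃ χ : G →* ℂ, χ g ≠ 1 := by
  obtain ⟨φ, hφ⟩ := CommGroup.exists_apply_ne_one_of_hasEnoughRootsOfUnity G ℂ hg
  refine ⟨(Units.coeHom ℂ).comp φ, fun hc => hφ ?_⟩
  ext
  simpa using hc

/-- There are only finitely many complex characters of a finite abelian group. -/
lemma finite_dual : Finite (G →* ℂ) := by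
  obtain ⟨e⟩ := CommGroup.monoidHom_mulEquiv_of_hasEnoughRootsOfUnity G ℂ
  have : Finite (G →* ℂˣ) := Finite.of_equiv G e.symm.toEquiv
  refine Finite.of_injective (fun χ : G →* ℂ => χ.toHomUnits) ?_
  intro χ χ' h
  ext g
  have := congrArg (fun ψ => ((ψ g : ℂˣ) : ℂ)) h
  simpa using this

/-- The characters span the space of all functions. -/
lemma span_chars :
    Submodule.span ℂ (Set.range (fun χ : G →* ℂ => (χ : G → ℂ))) = ⊤ := by
  rw [eq_top_iff]
  intro h _
  apply mem_of_relConst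
  · exact Submodule.subset_span ⟨1, by funext g; simp⟩
  · apply span_mul_closed
    rintro - ⟨χ, rfl⟩ - ⟨χ', rfl⟩
    apply Submodule.subset_span
    exact ⟨χ * χ', by funext g; simp⟩
  · intro t t' hrel
    have hchi : ∀ χ : G →* ℂ, χ t = χ t' := fun χ =>
      hrel _ (Submodule.subset_span ⟨χ, rfl⟩)
    have : t = t' := by
      by_contra hne
      have h1 : t * t'⁻¹ ≠ 1 := by
        intro hc
        exact hne (mul_inv_eq_one.mp hc)
      obtain ⟨χ, hχ⟩ := exists_char G h1
      apply hχ
      have : χ t * χ t'⁻¹ = χ t' * χ t'⁻¹ := by rw [hchi χ]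
      calc χ (t * t'⁻¹) = χ t * χ t'⁻¹ := map_mul χ _ _
        _ = χ t' * χ t'⁻¹ := this
        _ = χ (t' * t'⁻¹) := (map_mul χ _ _).symm
        _ = 1 := by rw [mul_inv_cancel, map_one]
    rw [this]

/-- The Fourier transform is injective. -/
lemma ftL_injective : Function.Injective (ftL G) := by
  have hFT : ∀ f : G → ℂ, ftL G f = 0 → f = 0 := by
    intro f hf
    classical
    let L : (G → ℂ) →ₗ[ℂ] ℂ :=
      { toFun := fun h => ∑ g, f g * h g
        map_add' := fun a b => by simp [mul_add, Finset.sum_add_distrib]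
        map_smul' := fun c a => by
          simp only [RingHom.id_apply, smul_eq_mul, Pi.smul_apply, Finset.mul_sum]
          exact Finset.sum_congr rfl fun x _ => by ring }
    have hL : L = 0 := by
      apply LinearMap.ext_on (span_chars G)
      rintro x ⟨χ, rfl⟩
      have := congrFun hf χ
      simpa [ftL_apply, L] using this
    funext g₀
    have := LinearMap.congr_fun hL (fun g => if g = g₀ then 1 else 0)
    simpa [L, mul_ite, Finset.sum_ite_eq'] using this
  intro f g hfg
  have h0 : f - g = 0 := hFT _ (by rw [map_sub, hfg, sub_self])
  exact sub_eq_zero.mp h0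

end Chars

section Partition

variable {G : Type*}

lemma ind_mem_PC {P : Set (Set G)}
    (hdis : ∀ X ∈ P, ∀ Y ∈ P, X ≠ Y → X ∩ Y = ∅) {S : Set G} (hS : S ∈ P) :
    ind S ∈ PC P := by
  intro Z hZ z₁ h₁ z₂ h₂
  by_cases hZS : Z = S
  · subst hZS; rw [ind_apply, ind_apply, if_pos h₁, if_pos h₂]
  · have hdisj := hdis Z hZ S hS hZS
    have hz₁ : z₁ ∉ S := fun hc => Set.eq_empty_iff_forall_notMem.mp hdisj z₁ ⟨h₁, hc⟩
    have hz₂ : z₂ ∉ S := fun hc => Set.eq_empty_iff_forall_notMem.mp hdisj z₂ ⟨h₂, hc⟩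
    rw [ind_apply, ind_apply, if_neg hz₁, if_neg hz₂]

lemma pc_le_span [Fintype G] {P : Set (Set G)}
    (hne : ∀ X ∈ P, X.Nonempty) (hcov : ∀ g : G, ∃ X ∈ P, g ∈ X)
    (hdis : ∀ X ∈ P, ∀ Y ∈ P, X ≠ Y → X ∩ Y = ∅) :
    PC P ≤ Submodule.span ℂ (ind '' P) := by
  classical
  intro f hf
  have hPfin : P.Finite := Set.toFinite P
  set c : Set G → ℂ := fun Z => if hZ : Z ∈ P then f ((hne Z hZ).choose) else 0 with hc
  have key : f = ∑ Z ∈ hPfin.toFinset, c Z • ind Z := by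
    funext g
    obtain ⟨Z₀, hZ₀, hgZ₀⟩ := hcov g
    rw [Finset.sum_apply]
    rw [Finset.sum_eq_single Z₀]
    · have hch : (hne Z₀ hZ₀).choose ∈ Z₀ := (hne Z₀ hZ₀).choose_spec
      simp only [hc, Pi.smul_apply, dif_pos hZ₀, ind_apply, if_pos hgZ₀, smul_eq_mul, mul_one]
      exact hf Z₀ hZ₀ g hgZ₀ _ hch
    · intro Z hZmem hZne
      have hZ : Z ∈ P := hPfin.mem_toFinset.mp hZmem
      have hg : g ∉ Z := fun hcc =>
        Set.eq_empty_iff_forall_notMem.mp (hdis Z hZ Z₀ hZ₀ hZne) g ⟨hcc, hgZ₀⟩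
      simp [ind_apply, hg]
    · intro hcn; exact absurd (hPfin.mem_toFinset.mpr hZ₀) hcn
  rw [key]
  apply Submodule.sum_mem
  intro Z hZmem
  exact Submodule.smul_mem _ _
    (Submodule.subset_span ⟨Z, hPfin.mem_toFinset.mp hZmem, rfl⟩)

end Partition

section Master

variable {G : Type*} [CommGroup G] [Fintype G]

lemma pc_eq_span {P : Set (Set G)}
    (hne : ∀ X ∈ P, X.Nonempty) (hcov : ∀ g : G, ∃ X ∈ P, g ∈ X)
    (hdis : ∀ X ∈ P, ∀ Y ∈ P, X ≠ Y → X ∩ Y = ∅) :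
    PC P = Submodule.span ℂ (ind '' P) := by
  refine le_antisymm (pc_le_span hne hcov hdis) ?_
  rw [Submodule.span_le]
  rintro - ⟨S, hS, rfl⟩
  exact ind_mem_PC hdis hS

/-- Master lemma: for a Schur-ring-like partition `P`, every function on the dual
that is constant on the dual classes of `P` is the Fourier transform of a function
constant on the parts. -/
theorem master {P : Set (Set G)}
    (hne : ∀ X ∈ P, X.Nonempty) (hcov : ∀ g : G, ∃ X ∈ P, g ∈ X)
    (hdis : ∀ X ∈ P, ∀ Y ∈ P, X ≠ Y → X ∩ Y = ∅) (hone : {1} ∈ P)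
    (hgen : ∀ X ∈ P, ∀ Y ∈ P, ∃ c ∈ PC P, ftL G (ind X) * ftL G (ind Y) = ftL G c)
    (h : (G →* ℂ) → ℂ)
    (hh : ∀ χ χ' : (G →* ℂ), (∀ S ∈ P, charSum χ S = charSum χ' S) → h χ = h χ') :
    ∃ f ∈ PC P, ftL G f = h := by
  have : Finite (G →* ℂ) := finite_dual G
  have : Fintype (G →* ℂ) := Fintype.ofFinite _
  set U : Submodule ℂ ((G →* ℂ) → ℂ) := Submodule.map (ftL G) (PC P) with hU
  have hspan : U = Submodule.span ℂ ((fun S => ftL G (ind S)) '' P) := by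
    rw [hU, pc_eq_span hne hcov hdis, Submodule.map_span, ← Set.image_comp]
    rfl
  have hmem : h ∈ U := by
    apply mem_of_relConst
    · exact ⟨ind {1}, ind_mem_PC hdis hone, by funext χ; exact ftL_ind_one χ⟩
    · rw [hspan]
      apply span_mul_closed
      rintro - ⟨X, hX, rfl⟩ - ⟨Y, hY, rfl⟩
      obtain ⟨cf, hcf, heq⟩ := hgen X hX Y hY
      rw [heq, ← hspan]
      exact ⟨cf, hcf, rfl⟩
    · intro χ χ' hrel
      apply hh
      intro S hS
      have := hrel (ftL G (ind S)) ⟨ind S, ind_mem_PC hdis hS, rfl⟩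
      rwa [ftL_ind, ftL_ind] at this
  obtain ⟨f, hf, hfh⟩ := hmem
  exact ⟨f, hf, hfh⟩

end Master

section Conv

variable {G : Type*} [CommGroup G] [Fintype G]

lemma charSum_one (χ : G →* ℂ) : charSum χ ({1} : Set G) = 1 := by
  rw [charSum, finsum_mem_singleton, map_one]

lemma ftL_ind_mul (X Y : Set G) (χ : G →* ℂ) :
    ftL G (ind X) χ * ftL G (ind Y) χ =
      ftL G (fun z => (Set.ncard {xy : G × G | xy.1 ∈ X ∧ xy.2 ∈ Y ∧ xy.1 * xy.2 = z} : ℂ)) χ := by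
  classical
  set Xf := (Set.toFinite X).toFinset with hXf
  set Yf := (Set.toFinite Y).toFinset with hYf
  have hset : ∀ z : G, {xy : G × G | xy.1 ∈ X ∧ xy.2 ∈ Y ∧ xy.1 * xy.2 = z} =
      ↑((Xf ×ˢ Yf).filter (fun p => p.1 * p.2 = z)) := by
    intro z; ext p
    simp [hXf, hYf, Set.Finite.mem_toFinset, Finset.mem_filter, Finset.mem_product, and_assoc]
  rw [ftL_ind, ftL_ind, charSum_eq_sum, charSum_eq_sum, ftL_apply]
  calc (∑ a ∈ Xf, χ a) * ∑ b ∈ Yf, χ b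
      = ∑ p ∈ Xf ×ˢ Yf, χ (p.1 * p.2) := by
        rw [Finset.sum_mul_sum, ← Finset.sum_product']
        exact Finset.sum_congr rfl fun p _ => (map_mul χ p.1 p.2).symm
    _ = ∑ z, ∑ p ∈ (Xf ×ˢ Yf).filter (fun p => p.1 * p.2 = z), χ (p.1 * p.2) :=
        (Finset.sum_fiberwise_of_maps_to (fun p _ => Finset.mem_univ (p.1 * p.2)) _).symm
    _ = ∑ z, (Set.ncard {xy : G × G | xy.1 ∈ X ∧ xy.2 ∈ Y ∧ xy.1 * xy.2 = z} : ℂ) * χ z := by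
        apply Finset.sum_congr rfl
        intro z _
        rw [Finset.sum_congr rfl (fun p hp => by rw [(Finset.mem_filter.mp hp).2]),
          Finset.sum_const, hset z, Set.ncard_coe_finset, nsmul_eq_mul]

lemma hgen_of_schur (A : SchurRing G) :
    ∀ X ∈ A.parts, ∀ Y ∈ A.parts,
      ∃ c ∈ PC A.parts, ftL G (ind X) * ftL G (ind Y) = ftL G c := by
  intro X hX Y hY
  refine ⟨fun z => (Set.ncard {xy : G × G | xy.1 ∈ X ∧ xy.2 ∈ Y ∧ xy.1 * xy.2 = z} : ℂ),
    ?_, ?_⟩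
  · intro Z hZ z₁ h₁ z₂ h₂
    have := A.struct_const X hX Y hY Z hZ z₁ h₁ z₂ h₂
    simpa using congrArg (Nat.cast (R := ℂ)) this
  · funext χ
    exact ftL_ind_mul X Y χ

end Conv

section Prod

variable {G₁ G₂ : Type*} [CommGroup G₁] [CommGroup G₂] [Fintype G₁] [Fintype G₂]

lemma char_factor (χ : (G₁ × G₂) →* ℂ) (g : G₁ × G₂) :
    χ g = χ.comp (MonoidHom.inl G₁ G₂) g.1 * χ.comp (MonoidHom.inr G₁ G₂) g.2 := by
  rw [MonoidHom.comp_apply, MonoidHom.comp_apply, ← map_mul]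
  congr 1
  simp [Prod.ext_iff]

lemma ftL_tensor (f₁ : G₁ → ℂ) (f₂ : G₂ → ℂ) (χ : (G₁ × G₂) →* ℂ) :
    ftL (G₁ × G₂) (fun z => f₁ z.1 * f₂ z.2) χ =
      ftL G₁ f₁ (χ.comp (MonoidHom.inl G₁ G₂)) * ftL G₂ f₂ (χ.comp (MonoidHom.inr G₁ G₂)) := by
  rw [ftL_apply, ftL_apply, ftL_apply, Fintype.sum_prod_type, Finset.sum_mul_sum]
  apply Finset.sum_congr rfl; intro a _
  apply Finset.sum_congr rfl; intro b _
  rw [char_factor χ (a, b)]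
  ring

lemma ind_prod (X : Set G₁) (Y : Set G₂) :
    ind (X ×ˢ Y) = fun z : G₁ × G₂ => ind X z.1 * ind Y z.2 := by
  funext z
  by_cases h1 : z.1 ∈ X <;> by_cases h2 : z.2 ∈ Y <;>
    simp [ind_apply, Set.mem_prod, h1, h2]

lemma charSum_prod (X : Set G₁) (Y : Set G₂) (χ : (G₁ × G₂) →* ℂ) :
    charSum χ (X ×ˢ Y) =
      charSum (χ.comp (MonoidHom.inl G₁ G₂)) X * charSum (χ.comp (MonoidHom.inr G₁ G₂)) Y := by
  rw [← ftL_ind, ← ftL_ind, ← ftL_ind, ind_prod, ftL_tensor]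

lemma comp_inl_mul (ψ₁ : G₁ →* ℂ) (ψ₂ : G₂ →* ℂ) :
    ((ψ₁.comp (MonoidHom.fst G₁ G₂)) * (ψ₂.comp (MonoidHom.snd G₁ G₂))).comp
      (MonoidHom.inl G₁ G₂) = ψ₁ := by
  ext g; simp

lemma comp_inr_mul (ψ₁ : G₁ →* ℂ) (ψ₂ : G₂ →* ℂ) :
    ((ψ₁.comp (MonoidHom.fst G₁ G₂)) * (ψ₂.comp (MonoidHom.snd G₁ G₂))).comp
      (MonoidHom.inr G₁ G₂) = ψ₂ := by
  ext g; simp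

lemma m_decomp (χ : (G₁ × G₂) →* ℂ) :
    (χ.comp (MonoidHom.inl G₁ G₂)).comp (MonoidHom.fst G₁ G₂) *
      (χ.comp (MonoidHom.inr G₁ G₂)).comp (MonoidHom.snd G₁ G₂) = χ := by
  ext g
  exact (char_factor χ g).symm

lemma charSum_m_prod (ψ₁ : G₁ →* ℂ) (ψ₂ : G₂ →* ℂ) (X : Set G₁) (Y : Set G₂) :
    charSum ((ψ₁.comp (MonoidHom.fst G₁ G₂)) * (ψ₂.comp (MonoidHom.snd G₁ G₂))) (X ×ˢ Y) =
      charSum ψ₁ X * charSum ψ₂ Y := by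
  rw [charSum_prod, comp_inl_mul, comp_inr_mul]

lemma hgen_prod (A₁ : SchurRing G₁) (A₂ : SchurRing G₂) :
    ∀ W ∈ {Z : Set (G₁ × G₂) | ∃ X ∈ A₁.parts, ∃ Y ∈ A₂.parts, Z = X ×ˢ Y},
    ∀ W' ∈ {Z : Set (G₁ × G₂) | ∃ X ∈ A₁.parts, ∃ Y ∈ A₂.parts, Z = X ×ˢ Y},
      ∃ c ∈ PC {Z : Set (G₁ × G₂) | ∃ X ∈ A₁.parts, ∃ Y ∈ A₂.parts, Z = X ×ˢ Y},
        ftL (G₁ × G₂) (ind W) * ftL (G₁ × G₂) (ind W') = ftL (G₁ × G₂) c := by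
  rintro - ⟨X, hX, Y, hY, rfl⟩ - ⟨X', hX', Y', hY', rfl⟩
  obtain ⟨c₁, hc₁, he₁⟩ := hgen_of_schur A₁ X hX X' hX'
  obtain ⟨c₂, hc₂, he₂⟩ := hgen_of_schur A₂ Y hY Y' hY'
  refine ⟨fun z => c₁ z.1 * c₂ z.2, ?_, ?_⟩
  · rintro - ⟨X'', hX'', Y'', hY'', rfl⟩ z₁ h₁ z₂ h₂
    have := hc₁ X'' hX'' z₁.1 h₁.1 z₂.1 h₂.1
    have := hc₂ Y'' hY'' z₁.2 h₁.2 z₂.2 h₂.2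
    simp_all
  · funext χ
    rw [Pi.mul_apply, ind_prod, ind_prod, ftL_tensor, ftL_tensor, ftL_tensor]
    have e₁ := congrFun he₁ (χ.comp (MonoidHom.inl G₁ G₂))
    have e₂ := congrFun he₂ (χ.comp (MonoidHom.inr G₁ G₂))
    rw [Pi.mul_apply] at e₁ e₂
    calc ftL G₁ (ind X) (χ.comp (MonoidHom.inl G₁ G₂)) *
          ftL G₂ (ind Y) (χ.comp (MonoidHom.inr G₁ G₂)) *
          (ftL G₁ (ind X') (χ.comp (MonoidHom.inl G₁ G₂)) *
            ftL G₂ (ind Y') (χ.comp (MonoidHom.inr G₁ G₂)))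
        = (ftL G₁ (ind X) (χ.comp (MonoidHom.inl G₁ G₂)) *
            ftL G₁ (ind X') (χ.comp (MonoidHom.inl G₁ G₂))) *
          (ftL G₂ (ind Y) (χ.comp (MonoidHom.inr G₁ G₂)) *
            ftL G₂ (ind Y') (χ.comp (MonoidHom.inr G₁ G₂))) := by ring
      _ = ftL G₁ c₁ (χ.comp (MonoidHom.inl G₁ G₂)) *
          ftL G₂ c₂ (χ.comp (MonoidHom.inr G₁ G₂)) := by rw [e₁, e₂]

/-- The pairing map from pairs of characters to characters of the product. -/
def mm (G₁ G₂ : Type*) [CommGroup G₁] [CommGroup G₂] :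
    (G₁ →* ℂ) × (G₂ →* ℂ) → ((G₁ × G₂) →* ℂ) :=
  fun χp => χp.1.comp (MonoidHom.fst G₁ G₂) * χp.2.comp (MonoidHom.snd G₁ G₂)

lemma charSum_mm (a : G₁ →* ℂ) (b : G₂ →* ℂ) (X : Set G₁) (Y : Set G₂) :
    charSum (mm G₁ G₂ (a, b)) (X ×ˢ Y) = charSum a X * charSum b Y :=
  charSum_m_prod a b X Y

lemma mm_decomp (χ : (G₁ × G₂) →* ℂ) :
    mm G₁ G₂ (χ.comp (MonoidHom.inl G₁ G₂), χ.comp (MonoidHom.inr G₁ G₂)) = χ :=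
  m_decomp χ

lemma mm_comp_inl (a : G₁ →* ℂ) (b : G₂ →* ℂ) :
    (mm G₁ G₂ (a, b)).comp (MonoidHom.inl G₁ G₂) = a := comp_inl_mul a b

lemma mm_comp_inr (a : G₁ →* ℂ) (b : G₂ →* ℂ) :
    (mm G₁ G₂ (a, b)).comp (MonoidHom.inr G₁ G₂) = b := comp_inr_mul a b

end Prod

end TensorDualAux

open TensorDualAux in
/-- `A` over `G₁ × G₂` is the tensor product of `A₁` and `A₂` iff the dual of `A`
is the tensor product of the duals of `A₁` and `A₂` (under the identification of
the dual of `G₁ × G₂` with the product of the duals). -/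
theorem tensor_iff_dual_tensor {G₁ G₂ : Type*} [CommGroup G₁] [CommGroup G₂]
    [Fintype G₁] [Fintype G₂]
    (A : SchurRing (G₁ × G₂)) (A₁ : SchurRing G₁) (A₂ : SchurRing G₂) :
    (A.parts = {Z : Set (G₁ × G₂) | ∃ X ∈ A₁.parts, ∃ Y ∈ A₂.parts, Z = X ×ˢ Y}) ↔
    (dualParts A.parts =
      {D : Set ((G₁ × G₂) →* ℂ) | ∃ C₁ ∈ dualParts A₁.parts, ∃ C₂ ∈ dualParts A₂.parts,
        D = (fun χp : (G₁ →* ℂ) × (G₂ →* ℂ) =>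
              (χp.1.comp (MonoidHom.fst G₁ G₂)) * (χp.2.comp (MonoidHom.snd G₁ G₂))) ''
            (C₁ ×ˢ C₂)}) := by
  classical
  have hmfun : (fun χp : (G₁ →* ℂ) × (G₂ →* ℂ) =>
      (χp.1.comp (MonoidHom.fst G₁ G₂)) * (χp.2.comp (MonoidHom.snd G₁ G₂))) = mm G₁ G₂ := rfl
  rw [hmfun]
  constructor
  · -- forward direction
    intro hA
    have key : ∀ (a : G₁ →* ℂ) (b : G₂ →* ℂ),
        {χ : (G₁ × G₂) →* ℂ | ∀ S ∈ A.parts, charSum χ S = charSum (mm G₁ G₂ (a, b)) S} =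
          mm G₁ G₂ '' (({ψ : G₁ →* ℂ | ∀ S ∈ A₁.parts, charSum ψ S = charSum a S}) ×ˢ
                ({ψ : G₂ →* ℂ | ∀ S ∈ A₂.parts, charSum ψ S = charSum b S})) := by
      intro a b
      ext χ
      constructor
      · intro hχ
        refine ⟨(χ.comp (MonoidHom.inl G₁ G₂), χ.comp (MonoidHom.inr G₁ G₂)),
          ⟨?_, ?_⟩, mm_decomp χ⟩
        · intro X hX
          have hmem : X ×ˢ ({1} : Set G₂) ∈ A.parts := by
            rw [hA]; exact ⟨X, hX, {1}, A₂.one_mem, rfl⟩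
          have h := hχ _ hmem
          rwa [charSum_prod, charSum_one, mul_one, charSum_mm, charSum_one, mul_one] at h
        · intro Y hY
          have hmem : ({1} : Set G₁) ×ˢ Y ∈ A.parts := by
            rw [hA]; exact ⟨{1}, A₁.one_mem, Y, hY, rfl⟩
          have h := hχ _ hmem
          rwa [charSum_prod, charSum_one, one_mul, charSum_mm, charSum_one, one_mul] at h
      · rintro ⟨⟨c, d⟩, ⟨hc, hd⟩, rfl⟩
        intro S hS
        rw [hA] at hS
        obtain ⟨X, hX, Y, hY, rfl⟩ := hS
        rw [charSum_mm, charSum_mm, hc X hX, hd Y hY]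
    ext D
    simp only [dualParts, Set.mem_range, Set.mem_setOf_eq]
    constructor
    · rintro ⟨χ₀, rfl⟩
      refine ⟨{ψ : G₁ →* ℂ | ∀ S ∈ A₁.parts,
          charSum ψ S = charSum (χ₀.comp (MonoidHom.inl G₁ G₂)) S},
        ⟨χ₀.comp (MonoidHom.inl G₁ G₂), rfl⟩,
        {ψ : G₂ →* ℂ | ∀ S ∈ A₂.parts,
          charSum ψ S = charSum (χ₀.comp (MonoidHom.inr G₁ G₂)) S},
        ⟨χ₀.comp (MonoidHom.inr G₁ G₂), rfl⟩, ?_⟩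
      have h := key (χ₀.comp (MonoidHom.inl G₁ G₂)) (χ₀.comp (MonoidHom.inr G₁ G₂))
      rw [mm_decomp χ₀] at h
      exact h
    · rintro ⟨C₁, ⟨a, rfl⟩, C₂, ⟨b, rfl⟩, rfl⟩
      exact ⟨mm G₁ G₂ (a, b), key a b⟩
  · -- backward direction
    intro hd
    -- every basic set of the tensor partition is a union of basic sets of A
    have step1 : ∀ X ∈ A₁.parts, ∀ Y ∈ A₂.parts, ind (X ×ˢ Y) ∈ PC A.parts := by
      intro X hX Y hY
      have hhh : ∀ χ χ' : (G₁ × G₂) →* ℂ, (∀ S ∈ A.parts, charSum χ S = charSum χ' S) →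
          ftL (G₁ × G₂) (ind (X ×ˢ Y)) χ = ftL (G₁ × G₂) (ind (X ×ˢ Y)) χ' := by
        intro χ χ' hcs
        rw [ftL_ind, ftL_ind]
        have hmemD : {ψ : (G₁ × G₂) →* ℂ | ∀ S ∈ A.parts, charSum ψ S = charSum χ S}
            ∈ dualParts A.parts := ⟨χ, rfl⟩
        rw [hd] at hmemD
        obtain ⟨C₁, ⟨a, rfl⟩, C₂, ⟨b, rfl⟩, hDeq⟩ := hmemD
        have hχmem : χ ∈ {ψ : (G₁ × G₂) →* ℂ | ∀ S ∈ A.parts, charSum ψ S = charSum χ S} :=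
          fun S _ => rfl
        have hχ'mem : χ' ∈ {ψ : (G₁ × G₂) →* ℂ | ∀ S ∈ A.parts, charSum ψ S = charSum χ S} :=
          fun S hS => (hcs S hS).symm
        rw [hDeq] at hχmem hχ'mem
        obtain ⟨⟨p1, p2⟩, ⟨hp1, hp2⟩, hpe⟩ := hχmem
        obtain ⟨⟨q1, q2⟩, ⟨hq1, hq2⟩, hqe⟩ := hχ'mem
        rw [← hpe, ← hqe, charSum_mm, charSum_mm, hp1 X hX, hp2 Y hY, hq1 X hX, hq2 Y hY]
      obtain ⟨f, hfPC, hf⟩ := master A.nonempty A.cover A.disjoint A.one_mem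
        (hgen_of_schur A) (ftL (G₁ × G₂) (ind (X ×ˢ Y))) hhh
      have heq : f = ind (X ×ˢ Y) := ftL_injective _ hf
      rwa [← heq]
    -- every basic set of A is constant on the tensor partition
    have step2 : ∀ Z ∈ A.parts,
        ind Z ∈ PC {W : Set (G₁ × G₂) | ∃ X ∈ A₁.parts, ∃ Y ∈ A₂.parts, W = X ×ˢ Y} := by
      intro Z hZ
      have ppne : ∀ W ∈ {W : Set (G₁ × G₂) | ∃ X ∈ A₁.parts, ∃ Y ∈ A₂.parts, W = X ×ˢ Y},
          W.Nonempty := by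
        rintro - ⟨X, hX, Y, hY, rfl⟩
        exact (A₁.nonempty X hX).prod (A₂.nonempty Y hY)
      have ppcov : ∀ g : G₁ × G₂,
          ∃ W ∈ {W : Set (G₁ × G₂) | ∃ X ∈ A₁.parts, ∃ Y ∈ A₂.parts, W = X ×ˢ Y}, g ∈ W := by
        intro g
        obtain ⟨X, hX, h1⟩ := A₁.cover g.1
        obtain ⟨Y, hY, h2⟩ := A₂.cover g.2
        exact ⟨X ×ˢ Y, ⟨X, hX, Y, hY, rfl⟩, ⟨h1, h2⟩⟩
      have ppdis : ∀ W ∈ {W : Set (G₁ × G₂) | ∃ X ∈ A₁.parts, ∃ Y ∈ A₂.parts, W = X ×ˢ Y},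
          ∀ W' ∈ {W : Set (G₁ × G₂) | ∃ X ∈ A₁.parts, ∃ Y ∈ A₂.parts, W = X ×ˢ Y},
          W ≠ W' → W ∩ W' = ∅ := by
        rintro - ⟨X, hX, Y, hY, rfl⟩ - ⟨X', hX', Y', hY', rfl⟩ hne
        rw [Set.prod_inter_prod]
        by_cases hXX : X = X'
        · have hYY : Y ≠ Y' := fun hYY => hne (by rw [hXX, hYY])
          rw [A₂.disjoint Y hY Y' hY' hYY, Set.prod_empty]
        · rw [A₁.disjoint X hX X' hX' hXX, Set.empty_prod]
      have ppone : ({1} : Set (G₁ × G₂)) ∈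
          {W : Set (G₁ × G₂) | ∃ X ∈ A₁.parts, ∃ Y ∈ A₂.parts, W = X ×ˢ Y} :=
        ⟨{1}, A₁.one_mem, {1}, A₂.one_mem, by rw [Set.singleton_prod_singleton]; rfl⟩
      have hhh : ∀ χ χ' : (G₁ × G₂) →* ℂ,
          (∀ S ∈ {W : Set (G₁ × G₂) | ∃ X ∈ A₁.parts, ∃ Y ∈ A₂.parts, W = X ×ˢ Y},
            charSum χ S = charSum χ' S) →
          ftL (G₁ × G₂) (ind Z) χ = ftL (G₁ × G₂) (ind Z) χ' := by
        intro χ χ' hcs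
        rw [ftL_ind, ftL_ind]
        have hmemD : {ψ : (G₁ × G₂) →* ℂ | ∀ S ∈ A.parts, charSum ψ S = charSum χ S}
            ∈ dualParts A.parts := ⟨χ, rfl⟩
        rw [hd] at hmemD
        obtain ⟨C₁, ⟨a, rfl⟩, C₂, ⟨b, rfl⟩, hDeq⟩ := hmemD
        have hχmem : χ ∈ {ψ : (G₁ × G₂) →* ℂ | ∀ S ∈ A.parts, charSum ψ S = charSum χ S} :=
          fun S _ => rfl
        rw [hDeq] at hχmem
        obtain ⟨⟨p1, p2⟩, ⟨hp1, hp2⟩, hpe⟩ := hχmem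
        -- the components of χ' lie in the same dual classes
        have hcomp1 : ∀ X ∈ A₁.parts,
            charSum (χ'.comp (MonoidHom.inl G₁ G₂)) X = charSum a X := by
          intro X hX
          have hmem : X ×ˢ ({1} : Set G₂) ∈
              {W : Set (G₁ × G₂) | ∃ X ∈ A₁.parts, ∃ Y ∈ A₂.parts, W = X ×ˢ Y} :=
            ⟨X, hX, {1}, A₂.one_mem, rfl⟩
          have h1 := hcs _ hmem
          rw [charSum_prod, charSum_one, mul_one, charSum_prod, charSum_one, mul_one] at h1
          rw [← h1, ← hpe, mm_comp_inl]
          exact hp1 X hX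
        have hcomp2 : ∀ Y ∈ A₂.parts,
            charSum (χ'.comp (MonoidHom.inr G₁ G₂)) Y = charSum b Y := by
          intro Y hY
          have hmem : ({1} : Set G₁) ×ˢ Y ∈
              {W : Set (G₁ × G₂) | ∃ X ∈ A₁.parts, ∃ Y ∈ A₂.parts, W = X ×ˢ Y} :=
            ⟨{1}, A₁.one_mem, Y, hY, rfl⟩
          have h1 := hcs _ hmem
          rw [charSum_prod, charSum_one, one_mul, charSum_prod, charSum_one, one_mul] at h1
          rw [← h1, ← hpe, mm_comp_inr]
          exact hp2 Y hY
        have hχ'mem : χ' ∈ mm G₁ G₂ ''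
            (({ψ : G₁ →* ℂ | ∀ S ∈ A₁.parts, charSum ψ S = charSum a S}) ×ˢ
             ({ψ : G₂ →* ℂ | ∀ S ∈ A₂.parts, charSum ψ S = charSum b S})) :=
          ⟨(χ'.comp (MonoidHom.inl G₁ G₂), χ'.comp (MonoidHom.inr G₁ G₂)),
            ⟨hcomp1, hcomp2⟩, mm_decomp χ'⟩
        rw [← hDeq] at hχ'mem
        exact (hχ'mem Z hZ).symm
      obtain ⟨f, hfPC, hf⟩ := master ppne ppcov ppdis ppone
        (hgen_prod A₁ A₂) (ftL (G₁ × G₂) (ind Z)) hhh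
      have heq : f = ind Z := ftL_injective _ hf
      rwa [← heq]
    -- combine the two steps
    have key2 : ∀ Z ∈ A.parts, ∀ X ∈ A₁.parts, ∀ Y ∈ A₂.parts, ∀ w : G₁ × G₂,
        w ∈ Z → w ∈ X ×ˢ Y → Z = X ×ˢ Y := by
      intro Z hZ X hX Y hY w hwZ hwXY
      apply Set.Subset.antisymm
      · intro u huZ
        have hc := step1 X hX Y hY Z hZ w hwZ u huZ
        rw [ind_apply, ind_apply, if_pos hwXY] at hc
        by_contra hu
        rw [if_neg hu] at hc
        exact one_ne_zero hc
      · intro u huXY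
        have hc := step2 Z hZ (X ×ˢ Y) ⟨X, hX, Y, hY, rfl⟩ w hwXY u huXY
        rw [ind_apply, ind_apply, if_pos hwZ] at hc
        by_contra hu
        rw [if_neg hu] at hc
        exact one_ne_zero hc
    ext Z
    simp only [Set.mem_setOf_eq]
    constructor
    · intro hZ
      obtain ⟨z, hz⟩ := A.nonempty Z hZ
      obtain ⟨X, hX, hzX⟩ := A₁.cover z.1
      obtain ⟨Y, hY, hzY⟩ := A₂.cover z.2
      exact ⟨X, hX, Y, hY, key2 Z hZ X hX Y hY z hz ⟨hzX, hzY⟩⟩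
    · rintro ⟨X, hX, Y, hY, rfl⟩
      obtain ⟨x, hx⟩ := A₁.nonempty X hX
      obtain ⟨y, hy⟩ := A₂.nonempty Y hY
      obtain ⟨Z, hZ, hzZ⟩ := A.cover (x, y)
      have heq := key2 Z hZ X hX Y hY (x, y) hzZ ⟨hx, hy⟩
      rw [← heq]
      exact hZ
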